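/- Let a₁,…,a_d > 0, λ > 0, and let ℰ_a = {x ∈ ℝ^d : Σ_i x_i²/a_i² ≤ 1}. For g ∼ N(0, I_d), log E[ exp( sup_{x ∈ ℰ_a} (⟨x,g⟩ − ‖x‖²/2) ) ] ≤ λ/2 + (1/2) Σ_{i=1}^d log(1 + a_i²/λ). -/

import Mathlib

open MeasureTheory ProbabilityTheory Metric Set
open scoped ENNReal NNReal

noncomputable section

open MeasureTheory.Measure Real in
private lemma st13.gauss_pt {c : ℝ} (x : ℝ) :
    (Real.toNNReal (gaussianPDFReal 0 1 x)) • Real.exp (c * x^2/2)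
      = (Real.sqrt (2*π))⁻¹ * Real.exp (-((1-c)/2) * x^2) := by
  rw [NNReal.smul_def, smul_eq_mul, Real.coe_toNNReal _ (gaussianPDFReal_nonneg 0 1 x)]
  unfold gaussianPDFReal
  push_cast
  rw [mul_assoc, ← Real.exp_add]
  norm_num
  ring_nf
  exact Or.inl trivial

open Real in
private lemma st13.gauss_int {c : ℝ} (hc : c < 1) :
    ∫ t, Real.exp (c * t^2/2) ∂(gaussianReal 0 1) = Real.sqrt (1-c)⁻¹ := by
  rw [gaussianReal_of_var_ne_zero 0 one_ne_zero]
  have hd : (gaussianPDF 0 1)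
      = fun x => ((Real.toNNReal (gaussianPDFReal 0 1 x) : ℝ≥0) : ℝ≥0∞) := rfl
  rw [hd, integral_withDensity_eq_integral_smul
    ((measurable_gaussianPDFReal 0 1).real_toNNReal)]
  simp_rw [st13.gauss_pt]
  rw [integral_const_mul, integral_gaussian]
  rw [← Real.sqrt_inv, ← Real.sqrt_mul (by positivity)]
  congr 1
  have h2 : (0:ℝ) < 2*π := by positivity
  field_simp

open Real in
private lemma st13.gauss_integrable {c : ℝ} (hc : c < 1) :
    Integrable (fun t => Real.exp (c * t^2/2)) (gaussianReal 0 1) := by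
  rw [gaussianReal_of_var_ne_zero 0 one_ne_zero]
  have hd : (gaussianPDF 0 1)
      = fun x => ((Real.toNNReal (gaussianPDFReal 0 1 x) : ℝ≥0) : ℝ≥0∞) := rfl
  rw [hd, integrable_withDensity_iff_integrable_smul
    ((measurable_gaussianPDFReal 0 1).real_toNNReal)]
  simp_rw [st13.gauss_pt]
  exact (integrable_exp_neg_mul_sq (by linarith)).const_mul _

open MeasureTheory.Measure in
private theorem st13.integrable_pi_prod {n : ℕ} {E : Type*}
    [MeasurableSpace E] (ν : Measure E) [SigmaFinite ν]
    {f : Fin n → E → ℝ} (hf : ∀ i, Integrable (f i) ν) :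
    Integrable (fun (x : Fin n → E) ↦ ∏ i, f i (x i)) (Measure.pi fun _ => ν) := by
  induction n with
  | zero => simp only [Finset.univ_eq_empty, Finset.prod_empty,
      integrable_const_iff, one_ne_zero, pi_empty_univ, ENNReal.one_lt_top, or_true]
            exact Or.inr ⟨by simp [Measure.pi_univ]⟩
  | succ n n_ih =>
      have := ((measurePreserving_piFinSuccAbove (fun _ : Fin (n+1) => ν) 0).symm)
      rw [← this.integrable_comp_emb (MeasurableEquiv.measurableEmbedding _)]
      simp_rw [MeasurableEquiv.piFinSuccAbove_symm_apply, Fin.insertNthEquiv,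
        Fin.prod_univ_succ, Fin.insertNth_zero]
      simp only [Fin.zero_succAbove, Function.comp_def, Fin.cons_zero, Fin.cons_succ]
      exact Integrable.mul_prod (hf 0) (n_ih (fun i ↦ hf _))

open MeasureTheory.Measure in
private theorem st13.integral_pi_prod {n : ℕ} {E : Type*}
    [MeasurableSpace E] (ν : Measure E) [SigmaFinite ν]
    (f : Fin n → E → ℝ) :
    ∫ x : Fin n → E, ∏ i, f i (x i) ∂(Measure.pi fun _ => ν) = ∏ i, ∫ x, f i x ∂ν := by
  induction n with
  | zero =>
      simp only [Finset.univ_eq_empty, Finset.prod_empty, integral_const,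
        pi_empty_univ, ENNReal.toReal_one, smul_eq_mul, mul_one, pow_zero, one_smul]
      simp [measureReal_def, Measure.pi_univ]
  | succ n n_ih =>
      calc
        _ = ∫ x : E × (Fin n → E),
            f 0 x.1 * ∏ i : Fin n, f (Fin.succ i) (x.2 i)
              ∂(ν.prod (Measure.pi fun _ : Fin n => ν)) := by
          rw [← ((measurePreserving_piFinSuccAbove (fun _ : Fin (n+1) => ν) 0).symm).integral_comp']
          simp_rw [MeasurableEquiv.piFinSuccAbove_symm_apply, Fin.insertNthEquiv,
            Fin.prod_univ_succ, Fin.insertNth_zero, Equiv.coe_fn_mk, Fin.cons_succ,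
            Fin.cons_zero]
          simp only [cast_eq]
        _ = (∫ x, f 0 x ∂ν) * ∏ i : Fin n, ∫ x, f (Fin.succ i) x ∂ν := by
          rw [← n_ih (fun i => f i.succ), ← integral_prod_mul]
        _ = ∏ i, ∫ x, f i x ∂ν := by rw [Fin.prod_univ_succ]

private lemma st13.quad_bound {a lam x g : ℝ} (ha : 0 < a) (hlam : 0 < lam) :
    x*g - x^2/2 - lam/2 * (x^2/a^2) ≤ a^2/(a^2+lam) * g^2 / 2 := by
  have ha2 : (0:ℝ) < a^2 := by positivity
  have hs : (0:ℝ) < a^2 + lam := by positivity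
  have hpos : (0:ℝ) < 2*a^2*(a^2+lam) := by positivity
  rw [← mul_le_mul_iff_right₀ hpos]
  have hL : 2*a^2*(a^2+lam) * (x*g - x^2/2 - lam/2 * (x^2/a^2))
      = 2*a^2*(a^2+lam)*(x*g) - (a^2+lam)^2*x^2 := by
    field_simp
    ring
  have hR : 2*a^2*(a^2+lam) * (a^2/(a^2+lam) * g^2 / 2) = a^2*a^2*g^2 := by
    field_simp
  rw [hL, hR]
  nlinarith [sq_nonneg ((a^2+lam)*x - a^2*g)]

/-- The standard Gaussian measure `N(0, I_d)` on `ℝ^d`. -/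
def stdGaussian (d : ℕ) : Measure (EuclideanSpace ℝ (Fin d)) :=
  (Measure.pi fun _ : Fin d => gaussianReal 0 1).map
    ⇑(EuclideanSpace.equiv (Fin d) ℝ).symm

/-- For the ellipsoid `ℰ_a = {x : Σᵢ xᵢ²/aᵢ² ≤ 1}` with `aᵢ > 0`,
any `λ > 0` and `g ∼ N(0,I_d)`,
`log E[exp(sup_{x∈ℰ_a}(⟨x,g⟩ − ‖x‖²/2))] ≤ λ/2 + (1/2)Σᵢ log(1 + aᵢ²/λ)`. -/
theorem statement13 {d : ℕ} (a : Fin d → ℝ) (ha : ∀ i, 0 < a i)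
    (lam : ℝ) (hlam : 0 < lam) :
    Real.log (∫ g, Real.exp
        (⨆ x : {x : EuclideanSpace ℝ (Fin d) // ∑ i, (x i) ^ 2 / (a i) ^ 2 ≤ 1},
          ((inner ℝ (x : EuclideanSpace ℝ (Fin d)) g : ℝ)
            - ‖(x : EuclideanSpace ℝ (Fin d))‖ ^ 2 / 2))
      ∂(stdGaussian d))
    ≤ lam / 2 + (1 / 2) * ∑ i, Real.log (1 + (a i) ^ 2 / lam) := by
  classical
  haveI : Nonempty {x : EuclideanSpace ℝ (Fin d) // ∑ i, (x i) ^ 2 / (a i) ^ 2 ≤ 1} :=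
    ⟨⟨0, by simp⟩⟩
  set c : Fin d → ℝ := fun i => (a i)^2 / ((a i)^2 + lam) with hc
  have hc1 : ∀ i, c i < 1 := fun i =>
    (div_lt_one (by positivity)).2 (by linarith)
  have hcinv : ∀ i, (1 - c i)⁻¹ = 1 + (a i)^2 / lam := by
    intro i
    have h1 : (a i)^2 + lam ≠ 0 := by positivity
    have h2 : 1 - c i = lam / ((a i)^2 + lam) := by
      rw [hc]; field_simp; ring
    rw [h2, inv_div]
    field_simp
    ring
  -- pointwise sup bound
  have hsup : ∀ g : EuclideanSpace ℝ (Fin d),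
      (⨆ x : {x : EuclideanSpace ℝ (Fin d) // ∑ i, (x i) ^ 2 / (a i) ^ 2 ≤ 1},
          ((inner ℝ (x : EuclideanSpace ℝ (Fin d)) g : ℝ)
            - ‖(x : EuclideanSpace ℝ (Fin d))‖ ^ 2 / 2))
        ≤ lam/2 + ∑ i, c i * (g i)^2 / 2 := by
    intro g
    apply ciSup_le
    rintro ⟨x, hx⟩
    have hin : (inner ℝ (x : EuclideanSpace ℝ (Fin d)) g : ℝ) = ∑ i, x i * g i := by
      simp [PiLp.inner_apply, RCLike.inner_apply, conj_trivial]
      exact Finset.sum_congr rfl fun i _ => mul_comm _ _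
    have hnorm : ‖(x : EuclideanSpace ℝ (Fin d))‖ ^ 2 = ∑ i, (x i)^2 := by
      rw [EuclideanSpace.norm_eq, Real.sq_sqrt (by positivity)]
      simp [sq_abs]
    simp only
    rw [hin, hnorm]
    have hterm : ∀ i ∈ Finset.univ, x i * g i - (x i)^2/2
        ≤ c i * (g i)^2 / 2 + lam/2 * ((x i)^2/(a i)^2) := by
      intro i _
      have := st13.quad_bound (a := a i) (lam := lam) (x := x i) (g := g i) (ha i) hlam
      rw [hc]
      linarith
    calc ∑ i, x i * g i - (∑ i, (x i)^2) / 2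
        = ∑ i, (x i * g i - (x i)^2/2) := by
          rw [Finset.sum_sub_distrib, Finset.sum_div]
      _ ≤ ∑ i, (c i * (g i)^2 / 2 + lam/2 * ((x i)^2/(a i)^2)) := Finset.sum_le_sum hterm
      _ = ∑ i, c i * (g i)^2 / 2 + lam/2 * ∑ i, (x i)^2/(a i)^2 := by
          rw [Finset.sum_add_distrib, Finset.mul_sum]
      _ ≤ ∑ i, c i * (g i)^2 / 2 + lam/2 * 1 :=
          add_le_add le_rfl (mul_le_mul_of_nonneg_left hx (by linarith))
      _ = lam/2 + ∑ i, c i * (g i)^2 / 2 := by ring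
  -- rewrite the integral over the pi measure
  rw [show stdGaussian d = Measure.map (MeasurableEquiv.toLp 2 (Fin d → ℝ))
      (Measure.pi fun _ : Fin d => gaussianReal 0 1) from rfl,
    MeasureTheory.integral_map_equiv]
  set μ := Measure.pi fun _ : Fin d => gaussianReal 0 1 with hμ
  set I := ∫ y : Fin d → ℝ, Real.exp
      (⨆ x : {x : EuclideanSpace ℝ (Fin d) // ∑ i, (x i) ^ 2 / (a i) ^ 2 ≤ 1},
        ((inner ℝ (x : EuclideanSpace ℝ (Fin d)) ((MeasurableEquiv.toLp 2 (Fin d → ℝ)) y) : ℝ)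
          - ‖(x : EuclideanSpace ℝ (Fin d))‖ ^ 2 / 2)) ∂μ with hI
  set B : (Fin d → ℝ) → ℝ :=
    fun y => Real.exp (lam/2) * ∏ i, Real.exp (c i * (y i)^2/2) with hB
  have hBpt : ∀ y : Fin d → ℝ, Real.exp
      (⨆ x : {x : EuclideanSpace ℝ (Fin d) // ∑ i, (x i) ^ 2 / (a i) ^ 2 ≤ 1},
        ((inner ℝ (x : EuclideanSpace ℝ (Fin d)) ((MeasurableEquiv.toLp 2 (Fin d → ℝ)) y) : ℝ)
          - ‖(x : EuclideanSpace ℝ (Fin d))‖ ^ 2 / 2)) ≤ B y := by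
    intro y
    refine le_trans (Real.exp_le_exp.2
      (hsup ((MeasurableEquiv.toLp 2 (Fin d → ℝ)) y))) (le_of_eq ?_)
    rw [Real.exp_add, Real.exp_sum]
    rfl
  have hBint : Integrable B μ :=
    (st13.integrable_pi_prod _ (fun i => st13.gauss_integrable (hc1 i))).const_mul _
  have hIle : I ≤ ∫ y, B y ∂μ :=
    integral_mono_of_nonneg (Filter.Eventually.of_forall fun y => (Real.exp_pos _).le)
      hBint (Filter.Eventually.of_forall hBpt)
  have hIB : ∫ y, B y ∂μ
      = Real.exp (lam/2) * ∏ i, Real.sqrt (1 + (a i)^2/lam) := by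
    simp only [hB, hμ]
    rw [MeasureTheory.integral_const_mul,
      st13.integral_pi_prod (gaussianReal 0 1) (fun i t => Real.exp (c i * t^2/2))]
    congr 1
    refine Finset.prod_congr rfl fun i _ => ?_
    rw [st13.gauss_int (hc1 i), hcinv i]
  have hI0 : 0 ≤ I := integral_nonneg fun y => (Real.exp_pos _).le
  have hppos : ∀ i ∈ (Finset.univ : Finset (Fin d)),
      Real.sqrt (1 + (a i)^2/lam) ≠ 0 := by
    intro i _
    positivity
  have hlog : Real.log (Real.exp (lam/2) * ∏ i, Real.sqrt (1 + (a i)^2/lam))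
      = lam/2 + (1/2) * ∑ i, Real.log (1 + (a i)^2/lam) := by
    rw [Real.log_mul (Real.exp_ne_zero _) (Finset.prod_ne_zero_iff.2 hppos), Real.log_exp,
      Real.log_prod hppos]
    congr 1
    rw [Finset.mul_sum]
    refine Finset.sum_congr rfl fun i _ => ?_
    rw [Real.log_sqrt (by positivity)]
    ring
  rcases eq_or_lt_of_le hI0 with h | h
  · rw [← h, Real.log_zero]
    have hs : 0 ≤ ∑ i, Real.log (1 + (a i)^2/lam) :=
      Finset.sum_nonneg fun i _ => Real.log_nonneg (le_add_of_nonneg_right (by positivity))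
    linarith
  · calc Real.log I ≤ Real.log (∫ y, B y ∂μ) := Real.log_le_log h hIle
      _ = lam/2 + (1/2) * ∑ i, Real.log (1 + (a i)^2/lam) := by rw [hIB, hlog]
      _ = lam / 2 + (1 / 2) * ∑ i, Real.log (1 + (a i) ^ 2 / lam) := rfl
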